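/- arXiv:2405.01854 — 2 statements merged into one kernel-verified Lean document; each statement's English description precedes it below -/
import Mathlib

section
/- Let π ∈ Sₙ and let πᵢ with i > 1 be a left-to-right minimum of π. Let j ≤ n be the largest index such that πᵢ = min(π₁,…,π_j). Then the (j−1)-th entry of s_{123,132}(π) equals πᵢ. -/
open scoped Classical

/-- `π` is a permutation of `{1,…,n}` presented as a list. -/
def IsPermOf (n : ℕ) (π : List ℕ) : Prop :=
  π.Perm ((List.range n).map (· + 1))

/-- 1-indexed entry of a list. -/
def ent (π : List ℕ) (i : ℕ) : ℕ := π.getD (i - 1) 0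

/-- `a` and `b` are order-isomorphic (same length, same relative order). -/
def isoBool (a b : List ℕ) : Bool :=
  (a.length == b.length) &&
    (List.range a.length).all fun i =>
      (List.range a.length).all fun j =>
        !(decide (i < j)) ||
          (decide (a.getD i 0 < a.getD j 0) == decide (b.getD i 0 < b.getD j 0))

/-- `l` contains a subsequence order-isomorphic to the pattern `p`. -/
def containsPat (l p : List ℕ) : Bool :=
  l.sublists.any fun t => isoBool t p

/-- One full run of the right-greedy pattern-avoiding stack machine.
`T` is the list of forbidden patterns; the stack is read top-to-bottom
(head = top).  Push is preferred whenever the resulting stack avoids all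
patterns in `T`; otherwise the top of the stack is popped to the output.
At the end the stack is emptied onto the output. -/
def sortRun (T : List (List ℕ)) : List ℕ → List ℕ → List ℕ → List ℕ
  | [], stack, out => out ++ stack
  | x :: rest, stack, out =>
    if T.all (fun p => !containsPat (x :: stack) p) then
      sortRun T rest (x :: stack) out
    else
      match stack with
      | [] => sortRun T rest [x] out
      | y :: st => sortRun T (x :: rest) st (out ++ [y])
termination_by inp stack _ => 2 * inp.length + stack.length
decreasing_by all_goals (simp only [List.length_cons]; omega)

/-- The generalized stack-sorting map `s_T`. -/
def sortT (T : List (List ℕ)) (π : List ℕ) : List ℕ := sortRun T π [] []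

/-- The stack-sorting map `s_{123,132}`. -/
def s132 (π : List ℕ) : List ℕ := sortT [[1, 2, 3], [1, 3, 2]] π

/-- `π_i` is a left-to-right minimum of `π` (1-indexed). -/
def IsLtrMin (π : List ℕ) (i : ℕ) : Prop :=
  1 ≤ i ∧ i ≤ π.length ∧ ∀ m, 1 ≤ m → m ≤ i → ent π i ≤ ent π m

/-- `π_i` is a valley of `π`. -/
def IsValley (π : List ℕ) (i : ℕ) : Prop :=
  IsLtrMin π i ∧ (i + 1 ≤ π.length → ¬ IsLtrMin π (i + 1)) ∧
    (i + 2 ≤ π.length → IsLtrMin π (i + 2))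

/-- Positions `i, i+1, …, i+j` of `π` form a valley-block: `π_{i+j}` is a
valley and `π_i > ⋯ > π_{i+j}` are the `j+1` smallest entries among
`π_1,…,π_{i+j}`. -/
def IsValleyBlock (π : List ℕ) (i j : ℕ) : Prop :=
  1 ≤ i ∧ i + j ≤ π.length ∧ IsValley π (i + j) ∧
    (∀ k, i ≤ k → k < i + j → ent π (k + 1) < ent π k) ∧
    (∀ m, 1 ≤ m → m < i → ent π i < ent π m)

/-- Auxiliary (fuelled) predicate: the positions `i, i+1, …, π.length` of `π`
decompose as an alternation `v̄₁ a₁ v̄₂ a₂ ⋯ v̄_j a_j` of valley-blocks and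
single entries. -/
def AltFromAux (π : List ℕ) : ℕ → ℕ → Prop
  | 0, i => i = π.length + 1
  | fuel + 1, i => i = π.length + 1 ∨
      ∃ j, IsValleyBlock π i j ∧ AltFromAux π fuel (i + j + 2)

/-- The suffix of `π` starting at position `i` is a (nonempty) alternation of
valley-blocks and single entries. -/
def AltDecomp (π : List ℕ) (i : ℕ) : Prop :=
  i ≤ π.length ∧ AltFromAux π (π.length + 1) i

/-- The valley-boundary `𝔅(π)`: the smallest index `i` such that the suffix
`π_i,…,π_n` is an alternation of valley-blocks and single entries, and
`π.length` if no such index exists. -/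
noncomputable def vBoundary (π : List ℕ) : ℕ :=
  if _h : ∃ i, 1 ≤ i ∧ AltDecomp π i then sInf {i | 1 ≤ i ∧ AltDecomp π i}
  else π.length

/-- The value `x` appears in the valley-region `π_{𝔅(π)},…,π_n` of `π`. -/
def InValleyRegion (π : List ℕ) (x : ℕ) : Prop :=
  ∃ i, vBoundary π ≤ i ∧ i ≤ π.length ∧ ent π i = x

/-- `π` is half-decreasing: `π_{n-1}, π_{n-3}, …` (⌊(n−1)/2⌋ entries) is the
identity `1, 2, …, ⌊(n−1)/2⌋`. -/
def HalfDecreasing (π : List ℕ) : Prop :=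
  ∀ k, 1 ≤ k → k ≤ (π.length - 1) / 2 → ent π (π.length + 1 - 2 * k) = k

/-- `π` is periodic under `s_{123,132}`. -/
def PeriodicS (π : List ℕ) : Prop := ∃ k, 1 ≤ k ∧ s132^[k] π = π
namespace StackAux

abbrev T₀ : List (List ℕ) := [[1,2,3],[1,3,2]]

def Good (l : List ℕ) : Prop := ∀ a b c : ℕ, [a,b,c].Sublist l → ¬(a < b ∧ a < c)

lemma good_of_sublist {l m : List ℕ} (h : Good l) (hs : m.Sublist l) : Good m :=
  fun a b c hsub => h a b c (hsub.trans hs)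

lemma good_short {l : List ℕ} (h : l.length ≤ 2) : Good l := by
  intro a b c hs _
  have := hs.length_le; simp at this; omega

lemma iso123 (a b c : ℕ) : isoBool [a,b,c] [1,2,3] = true ↔ (a < b ∧ a < c ∧ b < c) := by
  simp [isoBool, List.range_succ]; omega

lemma iso132 (a b c : ℕ) : isoBool [a,b,c] [1,3,2] = true ↔ (a < b ∧ a < c ∧ ¬ (b < c)) := by
  simp [isoBool, List.range_succ]; omega

lemma iso_len {t p : List ℕ} (h : isoBool t p = true) : t.length = p.length := by
  simp [isoBool] at h; exact h.1

lemma contains_iff (l p : List ℕ) :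
    containsPat l p = true ↔ ∃ t, t.Sublist l ∧ isoBool t p = true := by
  simp [containsPat, List.any_eq_true, List.mem_sublists]

lemma len3 {t : List ℕ} (h : t.length = 3) : ∃ a b c, t = [a,b,c] := by
  match t, h with
  | [a,b,c], _ => exact ⟨a,b,c,rfl⟩

lemma cond_iff (l : List ℕ) :
    (T₀.all (fun p => !containsPat l p) = true) ↔ Good l := by
  constructor
  · intro h a b c hsub ⟨h1, h2⟩
    simp only [T₀, List.all_cons, List.all_nil, Bool.and_true, Bool.and_eq_true,
      Bool.not_eq_true'] at h
    by_cases hbc : b < c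
    · have : containsPat l [1,2,3] = true :=
        (contains_iff _ _).2 ⟨[a,b,c], hsub, (iso123 a b c).2 ⟨h1,h2,hbc⟩⟩
      simp [h.1] at this
    · have : containsPat l [1,3,2] = true :=
        (contains_iff _ _).2 ⟨[a,b,c], hsub, (iso132 a b c).2 ⟨h1,h2,hbc⟩⟩
      simp [h.2] at this
  · intro hg
    simp only [T₀, List.all_cons, List.all_nil, Bool.and_true, Bool.and_eq_true,
      Bool.not_eq_true']
    constructor
    · by_contra h
      rw [Bool.not_eq_false, contains_iff] at h
      obtain ⟨t, hsub, hiso⟩ := h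
      obtain ⟨a,b,c,rfl⟩ := len3 (iso_len hiso)
      rw [iso123] at hiso
      exact hg a b c hsub ⟨hiso.1, hiso.2.1⟩
    · by_contra h
      rw [Bool.not_eq_false, contains_iff] at h
      obtain ⟨t, hsub, hiso⟩ := h
      obtain ⟨a,b,c,rfl⟩ := len3 (iso_len hiso)
      rw [iso132] at hiso
      exact hg a b c hsub ⟨hiso.1, hiso.2.1⟩

lemma cond_false {x : ℕ} {S : List ℕ} (h : ¬ Good (x :: S)) :
    (T₀.all fun p => !containsPat (x :: S) p) = false := by
  cases hc : (T₀.all fun p => !containsPat (x :: S) p) with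
  | false => rfl
  | true => exact absurd ((cond_iff _).1 hc) h

lemma run_nil (T stack out) : sortRun T [] stack out = out ++ stack := by
  rw [sortRun.eq_def]

lemma run_push (T) (x : ℕ) (rest stack out)
    (h : T.all (fun p => !containsPat (x :: stack) p) = true) :
    sortRun T (x :: rest) stack out = sortRun T rest (x :: stack) out := by
  rw [sortRun.eq_def]; simp [h]

lemma run_pop (T) (x : ℕ) (rest : List ℕ) (y : ℕ) (st out : List ℕ)
    (h : T.all (fun p => !containsPat (x :: y :: st) p) = false) :
    sortRun T (x :: rest) (y :: st) out = sortRun T (x :: rest) st (out ++ [y]) := by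
  rw [sortRun.eq_def]; simp [h]

lemma run_prefix (T) : ∀ (inp stack out : List ℕ), ∃ t, sortRun T inp stack out = out ++ t := by
  intro inp stack out
  induction inp, stack, out using sortRun.induct T with
  | case1 stack out => exact ⟨stack, run_nil T stack out⟩
  | case2 x rest stack out h ih => rw [run_push T x rest stack out h]; exact ih
  | case3 x rest out h ih =>
      rw [sortRun.eq_def]
      simp only [Bool.not_eq_true] at h
      simp [h]
      exact ih
  | case4 x rest out y st h ih =>
      simp only [Bool.not_eq_true] at h
      rw [run_pop T x rest y st out h]
      obtain ⟨t, ht⟩ := ih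
      exact ⟨y :: t, by simpa using ht⟩

lemma step_gt (v x : ℕ) (hvx : v < x) :
    ∀ (S : List ℕ), Good S → (∀ y ∈ S, v < y) →
    ∀ rest out, ∃ S' out',
      sortRun T₀ (x :: rest) S out = sortRun T₀ rest S' (out ++ out') ∧
      Good S' ∧ (∀ y ∈ S', v < y) ∧ S'.length + out'.length = S.length + 1 ∧ S' ≠ [] := by
  intro S
  induction S with
  | nil =>
    intro _ _ rest out
    refine ⟨[x], [], ?_, good_short (by simp), ?_, by simp, by simp⟩
    · rw [run_push _ _ _ _ _ ((cond_iff _).2 (good_short (by simp)))]; simp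
    · simpa using hvx
  | cons y st ih =>
    intro hg hmem rest out
    cases hc : (T₀.all fun p => !containsPat (x :: y :: st) p) with
    | true =>
      refine ⟨x :: y :: st, [], ?_, (cond_iff _).1 hc, ?_, by simp, by simp⟩
      · rw [run_push _ _ _ _ _ hc]; simp
      · intro z hz
        rcases List.mem_cons.1 hz with rfl | h
        · exact hvx
        · exact hmem z h
    | false =>
      rw [run_pop _ _ _ _ _ _ hc]
      obtain ⟨S', out', heq, hg', hm', hlen, hne⟩ :=
        ih (good_of_sublist hg (List.sublist_cons_self _ _))
          (fun z hz => hmem z (List.mem_cons_of_mem _ hz)) rest (out ++ [y])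
      refine ⟨S', [y] ++ out', ?_, hg', hm', by simp at hlen ⊢; omega, hne⟩
      rw [heq]; simp

lemma phase_gt (v : ℕ) : ∀ (pre : List ℕ), (∀ x ∈ pre, v < x) →
    ∀ S out rest, Good S → (∀ y ∈ S, v < y) →
    ∃ S' out', sortRun T₀ (pre ++ rest) S out = sortRun T₀ rest S' (out ++ out') ∧
      Good S' ∧ (∀ y ∈ S', v < y) ∧ S'.length + out'.length = S.length + pre.length ∧
      (S ≠ [] ∨ pre ≠ [] → S' ≠ []) := by
  intro pre
  induction pre with
  | nil =>
    intro _ S out rest hg hm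
    exact ⟨S, [], by simp, hg, hm, by simp, fun h => h.resolve_right (by simp)⟩
  | cons x pre' ih =>
    intro hmem S out rest hg hm
    obtain ⟨S₁, o₁, heq1, hg1, hm1, hlen1, hne1⟩ :=
      step_gt v x (hmem x (by simp)) S hg hm (pre' ++ rest) out
    obtain ⟨S', o₂, heq2, hg', hm', hlen2, hne2⟩ :=
      ih (fun z hz => hmem z (by simp [hz])) S₁ (out ++ o₁) rest hg1 hm1
    refine ⟨S', o₁ ++ o₂, ?_, hg', hm', by simp at hlen1 hlen2 ⊢; omega,
      fun _ => hne2 (Or.inl hne1)⟩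
    rw [List.cons_append, heq1, heq2, List.append_assoc]

lemma step_v (v : ℕ) : ∀ (S : List ℕ), Good S → (∀ y ∈ S, v < y) → S ≠ [] →
    ∀ rest out, ∃ b out',
      sortRun T₀ (v :: rest) S out = sortRun T₀ rest [v, b] (out ++ out') ∧
      v < b ∧ out'.length + 2 = S.length + 1 := by
  intro S
  induction S with
  | nil => intro _ _ h; exact absurd rfl h
  | cons c S₂ ih =>
    intro hg hm _ rest out
    cases S₂ with
    | nil =>
      refine ⟨c, [], ?_, hm c (by simp), by simp⟩
      rw [run_push _ _ _ _ _ ((cond_iff _).2 (good_short (by simp)))]; simp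
    | cons c₂ S₃ =>
      have hbad : ¬ Good (v :: c :: c₂ :: S₃) := fun hgd =>
        hgd v c c₂ (by simp) ⟨hm c (by simp), hm c₂ (by simp)⟩
      rw [run_pop _ _ _ _ _ _ (cond_false hbad)]
      obtain ⟨b, out', heq, hvb, hlen⟩ := ih (good_of_sublist hg (List.sublist_cons_self _ _))
        (fun z hz => hm z (List.mem_cons_of_mem _ hz)) (by simp) rest (out ++ [c])
      exact ⟨b, [c] ++ out', by rw [heq]; simp, hvb, by simp at hlen ⊢; omega⟩

lemma step_mid (v b : ℕ) (hvb : v < b) (x : ℕ) (hvx : v < x) :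
    ∀ (A : List ℕ), Good (A ++ [v, b]) → (∀ y ∈ A, v < y) →
    ∀ rest out, ∃ A' out',
      sortRun T₀ (x :: rest) (A ++ [v, b]) out = sortRun T₀ rest (A' ++ [v, b]) (out ++ out') ∧
      Good (A' ++ [v, b]) ∧ (∀ y ∈ A', v < y) ∧ A'.length + out'.length = A.length + 1 := by
  intro A
  induction A with
  | nil =>
    intro _ _ rest out
    have hgx : Good (x :: v :: b :: []) := by
      intro a b' c hs hab
      have h3 : [a,b',c] = [x,v,b] := hs.eq_of_length (by simp)
      simp only [List.cons.injEq, and_true] at h3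
      obtain ⟨rfl, rfl, rfl⟩ := h3
      omega
    refine ⟨[x], [], ?_, by simpa using hgx, by simpa using hvx, by simp⟩
    rw [List.nil_append, run_push _ _ _ _ _ ((cond_iff _).2 hgx)]; simp
  | cons a A₂ ih =>
    intro hg hm rest out
    rw [List.cons_append]
    cases hc : (T₀.all fun p => !containsPat (x :: a :: (A₂ ++ [v, b])) p) with
    | true =>
      refine ⟨x :: a :: A₂, [], ?_, ?_, ?_, by simp⟩
      · rw [run_push _ _ _ _ _ hc]; simp
      · have := (cond_iff _).1 hc
        simpa using this
      · intro z hz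
        rcases List.mem_cons.1 hz with rfl | h
        · exact hvx
        · exact hm z h
    | false =>
      rw [run_pop _ _ _ _ _ _ hc]
      obtain ⟨A', out', heq, hg', hm', hlen⟩ :=
        ih (good_of_sublist hg (by rw [List.cons_append]; exact List.sublist_cons_self _ _))
          (fun z hz => hm z (List.mem_cons_of_mem _ hz)) rest (out ++ [a])
      refine ⟨A', [a] ++ out', ?_, hg', hm', by simp at hlen ⊢; omega⟩
      rw [heq]; simp

lemma phase_mid (v b : ℕ) (hvb : v < b) : ∀ (mid : List ℕ), (∀ x ∈ mid, v < x) →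
    ∀ A out rest, Good (A ++ [v, b]) → (∀ y ∈ A, v < y) →
    ∃ A' out',
      sortRun T₀ (mid ++ rest) (A ++ [v, b]) out = sortRun T₀ rest (A' ++ [v, b]) (out ++ out') ∧
      Good (A' ++ [v, b]) ∧ (∀ y ∈ A', v < y) ∧
      A'.length + out'.length = A.length + mid.length := by
  intro mid
  induction mid with
  | nil => intro _ A out rest hg hm; exact ⟨A, [], by simp, hg, hm, by simp⟩
  | cons x mid' ih =>
    intro hmem A out rest hg hm
    obtain ⟨A₁, o₁, heq1, hg1, hm1, hlen1⟩ :=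
      step_mid v b hvb x (hmem x (by simp)) A hg hm (mid' ++ rest) out
    obtain ⟨A', o₂, heq2, hg', hm', hlen2⟩ :=
      ih (fun z hz => hmem z (by simp [hz])) A₁ (out ++ o₁) rest hg1 hm1
    refine ⟨A', o₁ ++ o₂, ?_, hg', hm', by simp at hlen1 hlen2 ⊢; omega⟩
    rw [List.cons_append, heq1, heq2, List.append_assoc]

lemma pop_all (x b : ℕ) (hxb : x < b) : ∀ (S : List ℕ), (∀ y ∈ S, x < y) →
    ∀ rest out, ∃ t, sortRun T₀ (x :: rest) (S ++ [b]) out = (out ++ S) ++ t := by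
  intro S
  induction S with
  | nil =>
    intro _ rest out
    obtain ⟨t, ht⟩ := run_prefix T₀ (x :: rest) [b] out
    exact ⟨t, by simpa using ht⟩
  | cons y S₂ ih =>
    intro hm rest out
    rw [List.cons_append]
    have hbad : ¬ Good (x :: y :: (S₂ ++ [b])) := fun hgd =>
      hgd x y b (by simp) ⟨hm y (by simp), hxb⟩
    rw [run_pop _ _ _ _ _ _ (cond_false hbad)]
    obtain ⟨t, ht⟩ := ih (fun z hz => hm z (List.mem_cons_of_mem _ hz)) rest (out ++ [y])
    exact ⟨t, by rw [ht]; simp⟩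

lemma getD_mid (P t : List ℕ) (v : ℕ) : (P ++ v :: t).getD P.length 0 = v := by
  rw [List.getD_eq_getElem _ _ (by simp)]
  rw [List.getElem_append_right (le_refl _)]
  simp

end StackAux

/-- if `π_i` (i > 1) is a ltr-min and `j ≤ n` is the largest index
with `π_i = min(π_1,…,π_j)`, then `s_{123,132}(π)_{j-1} = π_i`. -/
theorem stmt1 (n : ℕ) (π : List ℕ) (hπ : IsPermOf n π) (i j : ℕ)
    (hi : 1 < i) (hltr : IsLtrMin π i) (hij : i ≤ j) (hjn : j ≤ n)
    (hmin : ∀ m, 1 ≤ m → m ≤ j → ent π i ≤ ent π m)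
    (hmax : ∀ j', j' ≤ n → (∀ m, 1 ≤ m → m ≤ j' → ent π i ≤ ent π m) → j' ≤ j) :
    ent (s132 π) (j - 1) = ent π i := by
  open StackAux in
  have hlen : π.length = n := by simpa using hπ.length_eq
  have hnd : π.Nodup := hπ.nodup_iff.2 (List.Nodup.map (fun a b h => by omega) List.nodup_range)
  set v := π.getD (i - 1) 0 with hv
  have hi1 : i - 1 < π.length := by omega
  -- strict minimality over the first j entries
  have hstrict : ∀ k, k < j → k ≠ i - 1 → v < π.getD k 0 := by
    intro k hk hki
    have hkl : k < π.length := by omega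
    have hle : v ≤ π.getD k 0 := by
      have := hmin (k + 1) (by omega) (by omega)
      simpa [ent, hv] using this
    have hne : v ≠ π.getD k 0 := by
      rw [hv, List.getD_eq_getElem _ _ hi1, List.getD_eq_getElem _ _ hkl]
      intro h
      exact hki ((hnd.getElem_inj_iff.1 h).symm)
    omega
  have hpre_mem : ∀ x ∈ π.take (i - 1), v < x := by
    intro x hx
    obtain ⟨k, hk, hke⟩ := List.mem_iff_getElem.1 hx
    simp only [List.getElem_take] at hke
    simp only [List.length_take] at hk
    have hk' : k < i - 1 := lt_of_lt_of_le hk (min_le_left _ _)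
    have := hstrict k (by omega) (by omega)
    rw [List.getD_eq_getElem _ _ (by omega)] at this
    rw [← hke]; exact this
  have hmid_mem : ∀ x ∈ (π.drop i).take (j - i), v < x := by
    intro x hx
    obtain ⟨k, hk, hke⟩ := List.mem_iff_getElem.1 hx
    simp only [List.getElem_take, List.getElem_drop] at hke
    simp only [List.length_take, List.length_drop] at hk
    have hk' : k < j - i := lt_of_lt_of_le hk (min_le_left _ _)
    have := hstrict (i + k) (by omega) (by omega)
    rw [List.getD_eq_getElem _ _ (by omega)] at this
    rw [← hke]; exact this
  have hmid_len : ((π.drop i).take (j - i)).length = j - i := by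
    simp only [List.length_take, List.length_drop]; omega
  have hpre_len : (π.take (i - 1)).length = i - 1 := by
    simp only [List.length_take]; omega
  have hdecomp : π = π.take (i - 1) ++ v :: ((π.drop i).take (j - i) ++ π.drop j) := by
    conv_lhs => rw [← List.take_append_drop (i - 1) π]
    congr 1
    rw [List.drop_eq_getElem_cons hi1]
    congr 1
    · rw [hv, List.getD_eq_getElem _ _ hi1]
    · have h1 : i - 1 + 1 = i := by omega
      rw [h1]
      conv_lhs => rw [← List.take_append_drop (j - i) (π.drop i)]
      rw [List.drop_drop]
      congr 2
      omega
  -- run the machine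
  obtain ⟨S₁, o₁, h1, hg1, hm1, hl1, hne1⟩ :=
    phase_gt v (π.take (i - 1)) hpre_mem [] []
      (v :: ((π.drop i).take (j - i) ++ π.drop j)) (good_short (by simp)) (by simp)
  have hS1ne : S₁ ≠ [] := hne1 (Or.inr (by
    intro h
    rw [h] at hpre_len
    simp at hpre_len
    omega))
  obtain ⟨b, o₂, h2, hvb, hl2⟩ :=
    step_v v S₁ hg1 hm1 hS1ne ((π.drop i).take (j - i) ++ π.drop j) ([] ++ o₁)
  obtain ⟨A', o₃, h3, hg3, hm3, hl3⟩ :=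
    phase_mid v b hvb ((π.drop i).take (j - i)) hmid_mem [] (([] ++ o₁) ++ o₂) (π.drop j)
      (good_short (by simp)) (by simp)
  rw [List.nil_append] at h3
  have hrun : s132 π =
      sortRun T₀ (π.drop j) (A' ++ [v, b]) ((([] ++ o₁) ++ o₂) ++ o₃) := by
    show sortRun T₀ π [] [] = _
    conv_lhs => rw [hdecomp]
    rw [h1, h2, h3]
  have hS1pos : 1 ≤ S₁.length := by
    cases S₁ with
    | nil => exact absurd rfl hS1ne
    | cons a t => simp
  rw [hpre_len] at hl1
  rw [hmid_len] at hl3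
  have hPlen : o₁.length + o₂.length + o₃.length + A'.length = j - 2 := by
    simp only [List.length_nil, Nat.zero_add] at hl1 hl2 hl3
    omega
  have hout_len : (((([] : List ℕ) ++ o₁) ++ o₂) ++ o₃ ++ A').length = j - 2 := by
    simp only [List.nil_append, List.length_append]; omega
  have hj2 : j - 1 - 1 = j - 2 := by omega
  have hgoal : ∀ t : List ℕ,
      ent (((([] : List ℕ) ++ o₁) ++ o₂) ++ o₃ ++ A' ++ v :: t) (j - 1) = v := by
    intro t
    show (((([] : List ℕ) ++ o₁) ++ o₂) ++ o₃ ++ A' ++ v :: t).getD (j - 1 - 1) 0 = v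
    rw [hj2, ← hout_len]
    exact getD_mid _ t v
  have hent : ent π i = v := rfl
  rw [hent]
  cases haft : π.drop j with
  | nil =>
    rw [hrun, haft, run_nil]
    have : ((([] ++ o₁) ++ o₂) ++ o₃) ++ (A' ++ [v, b]) =
        (((([] : List ℕ) ++ o₁) ++ o₂) ++ o₃ ++ A' ++ v :: [b]) := by
      simp [List.append_assoc]
    rw [this]
    exact hgoal [b]
  | cons x aft' =>
    -- x = π[j] and x < v
    have hjl : j < π.length := by
      have := congrArg List.length haft
      simp only [List.length_drop, List.length_cons] at this
      omega
    have hx : x = π[j] := by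
      rw [List.drop_eq_getElem_cons hjl] at haft
      exact (List.cons.injEq _ _ _ _ ▸ haft).1.symm
    have hxv : x < v := by
      by_contra hge
      push_neg at hge
      have hcon := hmax (j + 1) (by omega) ?_
      · omega
      · intro m hm1 hmj
        rcases Nat.lt_or_ge m (j + 1) with hlt | hge2
        · exact hmin m hm1 (by omega)
        · have hmej : m = j + 1 := by omega
          subst hmej
          have hej : ent π (j + 1) = π[j] := by
            show π.getD (j + 1 - 1) 0 = π[j]
            have hh : j + 1 - 1 = j := by omega
            rw [hh, List.getD_eq_getElem _ _ hjl]
          rw [hent, hej, ← hx]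
          exact hge
    have hmemv : ∀ z ∈ A' ++ [v], x < z := by
      intro z hz
      rcases List.mem_append.1 hz with h | h
      · have := hm3 z h; omega
      · simp at h; omega
    obtain ⟨t, ht⟩ := pop_all x b (by omega) (A' ++ [v]) hmemv aft' ((([] ++ o₁) ++ o₂) ++ o₃)
    have hstk : (A' ++ [v]) ++ [b] = A' ++ [v, b] := by simp
    rw [hrun, haft, ← hstk, ht]
    have hre : ((((([] : List ℕ) ++ o₁) ++ o₂) ++ o₃) ++ (A' ++ [v])) ++ t =
        (((([] : List ℕ) ++ o₁) ++ o₂) ++ o₃ ++ A' ++ v :: t) := by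
      simp [List.append_assoc]
    rw [hre]
    exact hgoal t
end

section
/- Suppose π ∈ Sₙ has two valley-blocks occupying positions i through j and positions j+2 through k (with a single entry π_{j+1} between them). Then s_{123,132}(π)_{j−1} = π_{j+1}. -/
open scoped Classical

theorem sortRun_push (T : List (List ℕ)) (x : ℕ) (r s o : List ℕ)
    (h : (T.all fun p => !containsPat (x :: s) p) = true) :
    sortRun T (x::r) s o = sortRun T r (x::s) o := by
  rw [sortRun.eq_def]; simp [h]

theorem sortRun_pop (T : List (List ℕ)) (x y : ℕ) (r st o : List ℕ)
    (h : ¬ (T.all fun p => !containsPat (x :: y :: st) p) = true) :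
    sortRun T (x::r) (y::st) o = sortRun T (x::r) st (o ++ [y]) := by
  rw [sortRun.eq_def]; simp [h]

theorem sortRun_nil (T : List (List ℕ)) (s o : List ℕ) : sortRun T [] s o = o ++ s := by
  rw [sortRun.eq_def]

theorem sortRun_out' (T : List (List ℕ)) : ∀ inp s o, (∀ o', sortRun T inp s (o' ++ o) = o' ++ sortRun T inp s o) := by
  intro inp s o
  induction inp, s, o using sortRun.induct T with
  | case1 s o => intro o'; rw [sortRun_nil, sortRun_nil, List.append_assoc]
  | case2 x r s o h ih => intro o'; rw [sortRun_push T x r s _ h, ih o', sortRun_push T x r s _ h]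
  | case3 x r o h ih =>
      intro o'
      have e1 : sortRun T (x::r) [] (o' ++ o) = sortRun T r [x] (o' ++ o) := by
        rw [sortRun.eq_def]; simp [h]
      have e2 : sortRun T (x::r) [] o = sortRun T r [x] o := by
        rw [sortRun.eq_def]; simp [h]
      rw [e1, e2]; exact ih o'
  | case4 x r o y st h ih =>
      intro o'
      rw [sortRun_pop T x y r st _ h, sortRun_pop T x y r st _ h, List.append_assoc]
      exact ih o'

theorem sortRun_out (T : List (List ℕ)) (inp s o : List ℕ) :
    sortRun T inp s o = o ++ sortRun T inp s [] := by
  have := sortRun_out' T inp s [] o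
  simpa using this
lemma isoBool_len {t p : List ℕ} (h : isoBool t p = true) : t.length = p.length := by
  unfold isoBool at h
  rw [Bool.and_eq_true] at h
  simpa using h.1

lemma iso123 (u v w : ℕ) (h1 : u < v) (h2 : v < w) : isoBool [u,v,w] [1,2,3] = true := by
  unfold isoBool
  simp [List.range_succ, List.all_cons, h1, h2, lt_trans h1 h2, List.getD]

lemma iso132 (u v w : ℕ) (h1 : u < w) (h2 : w < v) : isoBool [u,v,w] [1,3,2] = true := by
  unfold isoBool
  simp [List.range_succ, List.all_cons, h1, h2, lt_trans h1 h2, List.getD]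
  omega
lemma not_iso3 (x a b : ℕ) (h : a < x) (p : List ℕ)
    (hp : p = [1,2,3] ∨ p = [1,3,2]) : isoBool [x,a,b] p = false := by
  rcases hp with hp | hp <;> subst hp <;>
  · unfold isoBool
    simp [List.range_succ, List.all_cons, List.getD]
    intro h'
    omega

abbrev T0 : List (List ℕ) := [[1,2,3],[1,3,2]]

def pOK (x : ℕ) (s : List ℕ) : Bool := T0.all fun p => !containsPat (x :: s) p

lemma containsPat_false_short (l p : List ℕ) (h : l.length < p.length) :
    containsPat l p = false := by
  unfold containsPat
  rw [List.any_eq_false]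
  intro t ht
  have hs : t.Sublist l := List.mem_sublists.mp ht
  have := hs.length_le
  cases hiso : isoBool t p with
  | false => simp
  | true => exact absurd (isoBool_len hiso) (by omega)

lemma pOK_short (x : ℕ) (s : List ℕ) (h : s.length ≤ 1) : pOK x s = true := by
  unfold pOK
  rw [List.all_eq_true]
  intro p hp
  have : containsPat (x :: s) p = false := by
    apply containsPat_false_short
    simp at hp
    rcases hp with hp | hp <;> subst hp <;> simp <;> omega
  simp [this]

lemma pOK_push2 (x a b : ℕ) (h : a < x) : pOK x [a,b] = true := by
  unfold pOK
  rw [List.all_eq_true]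
  intro p hp
  have hp' : p = [1,2,3] ∨ p = [1,3,2] := by simpa using hp
  have : containsPat [x,a,b] p = false := by
    unfold containsPat
    rw [List.any_eq_false]
    intro t ht
    have hs : t.Sublist [x,a,b] := List.mem_sublists.mp ht
    have hle := hs.length_le
    by_cases h3 : t.length = 3
    · have : t = [x,a,b] := hs.eq_of_length (by simpa using h3)
      subst this
      simp [not_iso3 x a b h p hp']
    · cases hiso : isoBool t p with
      | false => simp
      | true =>
          have := isoBool_len hiso
          rcases hp' with hp' | hp' <;> subst hp' <;> simp at this <;> omega
  simp [this]

lemma pOK_false (x a b : ℕ) (s : List ℕ) (hab : List.Sublist [a,b] s)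
    (h1 : x < a) (h2 : x < b) (hne : a ≠ b) : pOK x s = false := by
  unfold pOK
  rw [List.all_eq_false]
  have hsub : List.Sublist [x,a,b] (x :: s) := List.Sublist.cons₂ x hab
  have hmem : [x,a,b] ∈ (x :: s).sublists := List.mem_sublists.mpr hsub
  rcases lt_or_gt_of_ne hne with hlt | hgt
  · exact ⟨[1,2,3], by simp, by
      have : containsPat (x :: s) [1,2,3] = true := by
        unfold containsPat
        rw [List.any_eq_true]
        exact ⟨[x,a,b], hmem, iso123 x a b h1 hlt⟩
      simp [this]⟩
  · exact ⟨[1,3,2], by simp, by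
      have : containsPat (x :: s) [1,3,2] = true := by
        unfold containsPat
        rw [List.any_eq_true]
        exact ⟨[x,a,b], hmem, iso132 x a b h2 hgt⟩
      simp [this]⟩
def pops (x : ℕ) : List ℕ → List ℕ × List ℕ
  | [] => ([], [])
  | y :: s => if pOK x (y :: s) then ([], y :: s) else
      ((y :: (pops x s).1), (pops x s).2)

lemma pops_append (x : ℕ) : ∀ s : List ℕ, (pops x s).1 ++ (pops x s).2 = s := by
  intro s
  induction s with
  | nil => simp [pops]
  | cons y s ih =>
      by_cases h : pOK x (y :: s) = true
      · simp [pops, h]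
      · simp [pops, h, ih]

lemma pops_spec : ∀ (s : List ℕ) (x : ℕ) (r o : List ℕ),
    sortRun T0 (x :: r) s o = sortRun T0 r (x :: (pops x s).2) (o ++ (pops x s).1) := by
  intro s
  induction s with
  | nil =>
      intro x r o
      have h := pOK_short x [] (by simp)
      simp only [pops]
      rw [sortRun_push T0 x r [] o h]
      simp
  | cons y s ih =>
      intro x r o
      by_cases h : pOK x (y :: s) = true
      · rw [sortRun_push T0 x r (y::s) o h]
        simp [pops, h]
      · rw [sortRun_pop T0 x y r s o h]
        rw [ih x r (o ++ [y])]
        simp [pops, h]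

lemma pops_of_pOK (x : ℕ) (s : List ℕ) (h : pOK x s = true) : pops x s = ([], s) := by
  cases s with
  | nil => simp [pops]
  | cons y s => simp [pops, h]

lemma pops_big (x z : ℕ) : ∀ (s : List ℕ), (∀ y ∈ s, x < y) → x < z → z ∉ s →
    pops x (s ++ [z]) = (s, [z]) := by
  intro s
  induction s with
  | nil =>
      intro _ _ _
      exact pops_of_pOK x [z] (pOK_short x [z] (by simp))
  | cons a s ih =>
      intro hs hz hns
      have hxa : x < a := hs a (by simp)
      have hsub : List.Sublist [a, z] (a :: (s ++ [z])) := by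
        apply List.Sublist.cons₂
        simp
      have haz : a ≠ z := fun h => hns (h ▸ (by simp))
      have hfalse : pOK x (a :: (s ++ [z])) = false :=
        pOK_false x a z (a :: (s ++ [z])) hsub hxa hz haz
      have := ih (fun y hy => hs y (by simp [hy])) hz (fun h => hns (by simp [h]))
      simp [pops, hfalse, this]
lemma getD_append_mid (l1 l2 : List ℕ) (y d : ℕ) : (l1 ++ y :: l2).getD l1.length d = y := by
  have h : l1.length < (l1 ++ y :: l2).length := by simp
  simp [List.getD, List.getElem?_eq_getElem h, List.getElem_append_right (le_refl l1.length)]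

/-- if positions `i,…,j` and `j+2,…,k` are two valley-blocks of
`π` with a single entry `π_{j+1}` between them, then
`s_{123,132}(π)_{j-1} = π_{j+1}`. -/
theorem stmt3 (n : ℕ) (π : List ℕ) (hπ : IsPermOf n π) (i j k : ℕ)
    (hij : i ≤ j) (hjk : j + 2 ≤ k)
    (h1 : IsValleyBlock π i (j - i)) (h2 : IsValleyBlock π (j + 2) (k - (j + 2))) :
    ent (s132 π) (j - 1) = ent π (j + 1) := by
  classical
  obtain ⟨hi1, hijL, hval, hdec0, hmin⟩ := h1
  obtain ⟨-, h2L0, -, -, h2min⟩ := h2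
  rw [show i + (j - i) = j by omega] at hijL hval hdec0
  rw [show j + 2 + (k - (j + 2)) = k by omega] at h2L0
  set L := π.length with hL
  have hj2L : j + 2 ≤ L := by omega
  have hnd : π.Nodup := hπ.nodup_iff.mpr (List.Nodup.map (fun a b => by omega) List.nodup_range)
  -- entries / structural helpers
  have hent : ∀ t, t < L → ent π (t+1) = π.getD t 0 := fun t _ => rfl
  have hdrop : ∀ t, t < L → π.drop t = ent π (t+1) :: π.drop (t+1) := by
    intro t h
    rw [List.drop_eq_getElem_cons h]
    congr 1
    simp [ent, List.getD, List.getElem?_eq_getElem h]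
  have htake : ∀ t, t < L → π.take (t+1) = π.take t ++ [ent π (t+1)] := by
    intro t h
    rw [List.take_succ]
    simp [ent, List.getD, List.getElem?_eq_getElem h]
  have hinj : ∀ a b, 1 ≤ a → a < b → b ≤ L → ent π a ≠ ent π b := by
    intro a b ha hab hb heq
    have ha' : a - 1 < π.length := by omega
    have hb' : b - 1 < π.length := by omega
    have e1 : ent π a = π[a-1] := by simp [ent, List.getD, List.getElem?_eq_getElem ha']
    have e2 : ent π b = π[b-1] := by simp [ent, List.getD, List.getElem?_eq_getElem hb']
    rw [e1, e2] at heq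
    have := (List.Nodup.getElem_inj_iff hnd).mp heq
    omega
  -- order facts
  have hjlt : ∀ m, 1 ≤ m → m ≤ j → ent π j ≤ ent π m := hval.1.2.2
  have hjj1 : ent π j < ent π (j+1) := by
    have hnl := hval.2.1 (by omega)
    unfold IsLtrMin at hnl
    push_neg at hnl
    obtain ⟨m, hm1, hm2, hm3⟩ := hnl (by omega) (by omega)
    rcases Nat.lt_or_ge m (j+1) with h | h
    · exact lt_of_le_of_lt (hjlt m hm1 (by omega)) hm3
    · have : m = j + 1 := by omega
      subst this; omega
  have hchain : ∀ d a, i ≤ a → a + d ≤ j → ent π (a + d) ≤ ent π a := by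
    intro d
    induction d with
    | zero => intro a _ _; simp
    | succ d ih =>
        intro a ha hd
        have h1 : ent π (a + d + 1) < ent π (a + d) := hdec0 (a + d) (by omega) (by omega)
        have h2 := ih a ha (by omega)
        rw [show a + (d+1) = (a + d) + 1 by omega]
        exact le_trans (le_of_lt h1) h2
  -- STAGE 1 : generic prefix invariant
  have A : ∀ t, t ≤ i - 1 → ∃ s o, sortRun T0 π [] [] = sortRun T0 (π.drop t) s o ∧
      (o ++ s).Perm (π.take t) ∧ (1 ≤ t → s ≠ []) := by
    intro t
    induction t with
    | zero => exact fun _ => ⟨[], [], by simp, by simp, by omega⟩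
    | succ t ih =>
        intro ht
        obtain ⟨s, o, he, hp, _⟩ := ih (by omega)
        have htL : t < L := by omega
        set x := ent π (t+1) with hxdef
        refine ⟨x :: (pops x s).2, o ++ (pops x s).1, ?_, ?_, fun _ => by simp⟩
        · rw [he, hdrop t htL, pops_spec]
        · rw [htake t htL]
          have p1 : ((o ++ (pops x s).1) ++ (x :: (pops x s).2)).Perm
              (x :: ((o ++ (pops x s).1) ++ (pops x s).2)) := List.perm_middle
          have p2 : (x :: ((o ++ (pops x s).1) ++ (pops x s).2)).Perm (x :: π.take t) := by
            rw [List.append_assoc, pops_append]; exact hp.cons x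
          have p3 : (x :: π.take t).Perm (π.take t ++ [x]) := by
            simpa using (List.perm_middle (l₁ := π.take t) (l₂ := ([] : List ℕ)) (a := x)).symm
          exact (p1.trans p2).trans p3
  rcases Nat.lt_or_ge j 2 with hjcase | hj2
  · -- j = 1, hence i = 1
    have hj1 : j = 1 := by omega
    have hi1' : i = 1 := by omega
    subst hj1
    have h0 : π = ent π 1 :: π.drop 1 := by simpa using hdrop 0 (by omega)
    have s1 : sortRun T0 π [] [] = sortRun T0 (π.drop 1) [ent π 1] [] := by
      conv_lhs => rw [h0]
      rw [pops_spec]; simp [pops]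
    have hp2 : pops (ent π 2) [ent π 1] = ([], [ent π 1]) :=
      pops_of_pOK _ _ (pOK_short _ _ (by simp))
    have s2 : sortRun T0 π [] [] = sortRun T0 (π.drop 2) [ent π 2, ent π 1] [] := by
      rw [s1, hdrop 1 (by omega), pops_spec, hp2]
      norm_num
    have hjj1' : ent π 1 < ent π 2 := by simpa using hjj1
    have hx1 : ent π 3 < ent π 2 := h2min 2 (by omega) (by omega)
    have hx2 : ent π 3 < ent π 1 := h2min 1 (by omega) (by omega)
    have hp3 : pops (ent π 3) [ent π 2, ent π 1] = ([ent π 2], [ent π 1]) := by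
      have := pops_big (ent π 3) (ent π 1) [ent π 2]
        (by intro y hy; simp at hy; rw [hy]; exact hx1) hx2
        (by simp; omega)
      simpa using this
    have s3 : sortRun T0 π [] [] = sortRun T0 (π.drop 3) [ent π 3, ent π 1] [ent π 2] := by
      rw [s2, hdrop 2 (by omega), pops_spec, hp3]
      simp
    have final : s132 π = [ent π 2] ++ sortRun T0 (π.drop 3) [ent π 3, ent π 1] [] := by
      show sortRun T0 π [] [] = _
      rw [s3, sortRun_out]
    rw [final]
    simp [ent]
  · -- j ≥ 2
    set t0 := max i 2 with ht0def
    have ht0i : i ≤ t0 := le_max_left _ _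
    have ht02 : 2 ≤ t0 := le_max_right _ _
    have ht0j : t0 ≤ j := max_le hij hj2
    have B : ∃ (o0 : List ℕ) (z m : ℕ),
        sortRun T0 π [] [] = sortRun T0 (π.drop t0) [ent π t0, z] o0 ∧
        o0.length = t0 - 2 ∧ 1 ≤ m ∧ m ≤ j ∧ ent π m = z ∧
        (∀ t', t0 ≤ t' → t' ≤ j → ent π t' < z) := by
      rcases Nat.lt_or_ge i 2 with hi2 | hi2
      · -- i = 1, t0 = 2
        have hi1' : i = 1 := by omega
        have ht0 : t0 = 2 := by omega
        have h0 : π = ent π 1 :: π.drop 1 := by simpa using hdrop 0 (by omega)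
        have s1 : sortRun T0 π [] [] = sortRun T0 (π.drop 1) [ent π 1] [] := by
          conv_lhs => rw [h0]
          rw [pops_spec]; simp [pops]
        have hp2 : pops (ent π 2) [ent π 1] = ([], [ent π 1]) :=
          pops_of_pOK _ _ (pOK_short _ _ (by simp))
        have s2 : sortRun T0 π [] [] = sortRun T0 (π.drop 2) [ent π 2, ent π 1] [] := by
          rw [s1, hdrop 1 (by omega), pops_spec, hp2]
          norm_num
        rw [ht0]
        refine ⟨[], ent π 1, 1, s2, by simp, by omega, by omega, rfl, ?_⟩
        intro t' h2t' ht'j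
        have hc : ent π (2 + (t' - 2)) ≤ ent π 2 := hchain (t' - 2) 2 (by omega) (by omega)
        rw [show 2 + (t' - 2) = t' by omega] at hc
        have : ent π 2 < ent π 1 := hdec0 1 (by omega) (by omega)
        omega
      · -- i ≥ 2, t0 = i
        have ht0 : t0 = i := by omega
        obtain ⟨s, o, he, hp, hne⟩ := A (i-1) (le_refl _)
        have hsne : s ≠ [] := hne (by omega)
        have hiL : i - 1 < L := by omega
        have hdropi : π.drop (i-1) = ent π i :: π.drop i := by
          have h' := hdrop (i-1) hiL
          rw [show i - 1 + 1 = i by omega] at h'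
          exact h'
        set x := ent π i with hxdef
        have hmemtake : ∀ y ∈ π.take (i-1), ∃ m', 1 ≤ m' ∧ m' ≤ i - 1 ∧ ent π m' = y := by
          intro y hy
          obtain ⟨idx, hidx, hyv⟩ := List.mem_iff_getElem.mp hy
          have hlen : (π.take (i-1)).length = i - 1 := by
            simp [List.length_take]; omega
          refine ⟨idx + 1, by omega, by omega, ?_⟩
          have hidx' : idx < π.length := by omega
          rw [← hyv, List.getElem_take]
          simp [ent, List.getD, List.getElem?_eq_getElem hidx']
        have hgt : ∀ y ∈ s, x < y := by
          intro y hy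
          obtain ⟨m', hm1', hm2', hm3'⟩ := hmemtake y (hp.subset (by simp [hy]))
          rw [← hm3']
          exact hmin m' hm1' (by omega)
        have hnds : s.Nodup := by
          have h1' : (π.take (i-1)).Nodup := (List.take_sublist _ _).nodup hnd
          have h2' : (o ++ s).Nodup := (hp.nodup_iff).mpr h1'
          exact h2'.of_append_right
        set z := s.getLast hsne with hzdef
        have hzs : s.dropLast ++ [z] = s := List.dropLast_append_getLast hsne
        have hzmem : z ∈ s := List.getLast_mem hsne
        have hxz : x < z := hgt z hzmem
        have hzn : z ∉ s.dropLast := by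
          rw [← hzs, List.nodup_append] at hnds
          intro hmem
          exact hnds.2.2 z hmem z (by simp) rfl
        have hpops : pops x s = (s.dropLast, [z]) := by
          conv_lhs => rw [← hzs]
          exact pops_big x z s.dropLast
            (fun y hy => hgt y (by rw [← hzs]; exact List.mem_append_left _ hy)) hxz hzn
        have he3 : sortRun T0 π [] [] = sortRun T0 (π.drop i) [x, z] (o ++ s.dropLast) := by
          rw [he, hdropi, pops_spec, hpops]
        have hlens : o.length + s.length = i - 1 := by
          have := hp.length_eq
          simp [List.length_take] at this
          omega
        have hslen : 1 ≤ s.length := by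
          cases s with
          | nil => exact absurd rfl hsne
          | cons a s => simp
        obtain ⟨mz, hmz1, hmz2, hmz3⟩ := hmemtake z (hp.subset (by simp [hzmem]))
        rw [ht0]
        refine ⟨o ++ s.dropLast, z, mz, he3, ?_, hmz1, by omega, hmz3, ?_⟩
        · simp [List.length_dropLast]; omega
        · intro t' hit' ht'j
          have hc : ent π (i + (t' - i)) ≤ ent π i := hchain (t' - i) i (le_refl _) (by omega)
          rw [show i + (t' - i) = t' by omega] at hc
          have : ent π i < ent π mz := hmin mz hmz1 (by omega)
          omega
    obtain ⟨o0, z, m, hB, hBlen, hm1, hmj, hez, hprop⟩ := B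
    -- STAGE 3 : through the block
    have C : ∀ d, t0 + d ≤ j → ∃ o, sortRun T0 π [] [] =
        sortRun T0 (π.drop (t0 + d)) [ent π (t0 + d), z] o ∧ o.length = t0 + d - 2 := by
      intro d
      induction d with
      | zero => intro _; exact ⟨o0, by simpa using hB, by simpa using hBlen⟩
      | succ d ih =>
          intro hd
          obtain ⟨o, he, hlen⟩ := ih (by omega)
          set t := t0 + d with htdef
          have htL : t < L := by omega
          have hx1 : ent π (t+1) < ent π t := hdec0 t (by omega) (by omega)
          have hx2 : ent π (t+1) < z := hprop (t+1) (by omega) (by omega)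
          have hzt : ent π t < z := hprop t (by omega) (by omega)
          have hpp : pops (ent π (t+1)) [ent π t, z] = ([ent π t], [z]) := by
            have := pops_big (ent π (t+1)) z [ent π t]
              (by intro y hy; simp at hy; rw [hy]; exact hx1) hx2 (by simp; omega)
            simpa using this
          refine ⟨o ++ [ent π t], ?_, by simp [hlen]; omega⟩
          rw [he, hdrop t htL, pops_spec, hpp, show t0 + (d + 1) = t + 1 by omega]
    obtain ⟨o, he, hlen⟩ := C (j - t0) (by omega)
    rw [show t0 + (j - t0) = j by omega] at he hlen
    -- STAGE 4 : push π_{j+1}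
    have hjL : j < L := by omega
    have hpj : pops (ent π (j+1)) [ent π j, z] = ([], [ent π j, z]) :=
      pops_of_pOK _ _ (pOK_push2 _ _ z hjj1)
    have h4 : sortRun T0 π [] [] =
        sortRun T0 (π.drop (j+1)) [ent π (j+1), ent π j, z] o := by
      rw [he, hdrop j hjL, pops_spec, hpj]
      simp
    -- STAGE 5 : pop π_{j+1}
    have hj1L : j + 1 < L := by omega
    have hlt1 : ent π (j+2) < ent π (j+1) := h2min (j+1) (by omega) (by omega)
    have hlt2 : ent π (j+2) < ent π j := h2min j (by omega) (by omega)
    have hltz : ent π (j+2) < z := by rw [← hez]; exact h2min m (by omega) (by omega)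
    have hzj : ent π j < z := hprop j ht0j (le_refl _)
    have hzj1 : z ≠ ent π (j+1) := by
      rw [← hez]
      exact hinj m (j+1) hm1 (by omega) (by omega)
    have hpp2 : pops (ent π (j+2)) [ent π (j+1), ent π j, z] =
        ([ent π (j+1), ent π j], [z]) := by
      have := pops_big (ent π (j+2)) z [ent π (j+1), ent π j]
        (by intro y hy; simp at hy; rcases hy with h | h <;> rw [h] <;> assumption) hltz
        (by simp; exact ⟨hzj1, by omega⟩)
      simpa using this
    have h5 : sortRun T0 π [] [] = sortRun T0 (π.drop (j+2)) [ent π (j+2), z]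
        (o ++ [ent π (j+1), ent π j]) := by
      rw [h4, hdrop (j+1) hj1L, pops_spec, hpp2]
    have final : s132 π = (o ++ [ent π (j+1), ent π j]) ++
        sortRun T0 (π.drop (j+2)) [ent π (j+2), z] [] := by
      show sortRun T0 π [] [] = _
      rw [h5, sortRun_out]
    rw [final]
    show ((o ++ [ent π (j+1), ent π j]) ++ _).getD (j - 1 - 1) 0 = _
    have hre : (o ++ [ent π (j+1), ent π j]) ++
        sortRun T0 (π.drop (j+2)) [ent π (j+2), z] [] =
        o ++ ent π (j+1) :: ([ent π j] ++ sortRun T0 (π.drop (j+2)) [ent π (j+2), z] []) := by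
      simp
    rw [hre, show j - 1 - 1 = o.length by omega]
    exact getD_append_mid _ _ _ _
end
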